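/- Let G be a simple 3-regular graph on 2n vertices that has a Hamiltonian cycle. Then there are at least 2^n ordered pairs (E1, E2) of edge sets of Hamiltonian cycles of L(G) such that E1 and E2 are disjoint and E1 ∪ E2 = E(L(G)). -/

import Mathlib

open SimpleGraph

namespace CubicAux

variable {W : Type*}

def edgeList : W → List W → List (Sym2 W)
  | _, [] => []
  | u, a :: t => s(u, a) :: edgeList a t

lemma edgeList_cons (u a : W) (t : List W) :
    edgeList u (a :: t) = s(u, a) :: edgeList a t := rfl

def walkFrom (H : SimpleGraph W) : (u : W) → (l : List W) → List.Chain H.Adj u l →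
    H.Walk u (l.getLastD u)
  | _, [], _ => Walk.nil
  | u, a :: t, h =>
      (Walk.cons (List.chain_cons.mp h).1
        (walkFrom H a t (List.chain_cons.mp h).2)).copy rfl (List.getLastD_cons (a := u) (b := a) (l := t)).symm

lemma support_walkFrom (H : SimpleGraph W) :
    ∀ (u : W) (l : List W) (h), (walkFrom H u l h).support = u :: l
  | _, [], _ => rfl
  | u, a :: t, h => by
      simp [walkFrom, support_walkFrom H a t]; exact support_walkFrom H a t _

lemma edges_walkFrom (H : SimpleGraph W) :
    ∀ (u : W) (l : List W) (h), (walkFrom H u l h).edges = edgeList u l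
  | _, [], _ => rfl
  | u, a :: t, h => by
      simp [walkFrom, edgeList_cons, edges_walkFrom H a t]; exact edges_walkFrom H a t _

section Core

variable {m : ℕ} (E M : ZMod m → W) (S : Finset (ZMod m))

def B (i : ZMod m) : List W := if i ∈ S then [M i, E i] else [E i]

def eb (i : ZMod m) : List (Sym2 W) :=
  if i ∈ S then [s(E (i-1), M i), s(M i, E i)] else [s(E (i-1), E i)]

def tl : ℕ → List W
  | 0 => []
  | k + 1 => tl k ++ B E M S ((k+1 : ℕ) : ZMod m)

def el : ℕ → List (Sym2 W)
  | 0 => []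
  | k + 1 => el k ++ eb E M S ((k+1 : ℕ) : ZMod m)

def fullList : List W := tl E M S (m - 1) ++ B E M S 0

lemma mem_B {x : W} {i : ZMod m} :
    x ∈ B E M S i ↔ (x = E i ∨ (i ∈ S ∧ x = M i)) := by
  by_cases h : i ∈ S <;> simp [B, h] <;> tauto

lemma mem_eb {x : Sym2 W} {i : ZMod m} :
    x ∈ eb E M S i ↔ ((i ∈ S ∧ (x = s(E (i-1), M i) ∨ x = s(M i, E i))) ∨
      (i ∉ S ∧ x = s(E (i-1), E i))) := by
  by_cases h : i ∈ S <;> simp [eb, h]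

lemma mem_tl {x : W} : ∀ k, x ∈ tl E M S k ↔
    ∃ j : ℕ, 1 ≤ j ∧ j ≤ k ∧ x ∈ B E M S (j : ZMod m)
  | 0 => by simp [tl]
  | k + 1 => by
      rw [tl, List.mem_append, mem_tl k]
      constructor
      · rintro (⟨j, h1, h2, h3⟩ | h)
        · exact ⟨j, h1, by omega, h3⟩
        · exact ⟨k+1, by omega, le_rfl, h⟩
      · rintro ⟨j, h1, h2, h3⟩
        rcases eq_or_lt_of_le h2 with rfl | h4
        · exact Or.inr h3
        · exact Or.inl ⟨j, h1, by omega, h3⟩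

lemma mem_el {x : Sym2 W} : ∀ k, x ∈ el E M S k ↔
    ∃ j : ℕ, 1 ≤ j ∧ j ≤ k ∧ x ∈ eb E M S (j : ZMod m)
  | 0 => by simp [el]
  | k + 1 => by
      rw [el, List.mem_append, mem_el k]
      constructor
      · rintro (⟨j, h1, h2, h3⟩ | h)
        · exact ⟨j, h1, by omega, h3⟩
        · exact ⟨k+1, by omega, le_rfl, h⟩
      · rintro ⟨j, h1, h2, h3⟩
        rcases eq_or_lt_of_le h2 with rfl | h4
        · exact Or.inr h3
        · exact Or.inl ⟨j, h1, by omega, h3⟩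

variable {H : SimpleGraph W}

lemma chain_tl (hadj1 : ∀ i, H.Adj (E (i-1)) (M i)) (hadj2 : ∀ i, H.Adj (M i) (E i))
    (hadj3 : ∀ i, H.Adj (E (i-1)) (E i)) :
    ∀ (k : ℕ) (l : List W), List.Chain H.Adj (E ((k : ℕ) : ZMod m)) l →
      List.Chain H.Adj (E 0) (tl E M S k ++ l)
  | 0, l, h => by simpa [tl] using h
  | k + 1, l, h => by
      rw [tl, List.append_assoc]
      apply chain_tl hadj1 hadj2 hadj3 k
      have hc : ((k : ℕ) : ZMod m) = ((k+1 : ℕ) : ZMod m) - 1 := by push_cast; ring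
      by_cases hS : ((k+1 : ℕ) : ZMod m) ∈ S
      · simp only [B, if_pos hS, List.cons_append, List.nil_append]
        rw [hc]
        exact List.Chain.cons (hadj1 _) (List.Chain.cons (hadj2 _) h)
      · simp only [B, if_neg hS, List.cons_append, List.nil_append]
        rw [hc]
        exact List.Chain.cons (hadj3 _) h

lemma chain_full (hm : 1 ≤ m) (hadj1 : ∀ i, H.Adj (E (i-1)) (M i))
    (hadj2 : ∀ i, H.Adj (M i) (E i)) (hadj3 : ∀ i, H.Adj (E (i-1)) (E i)) :
    List.Chain H.Adj (E 0) (fullList E M S) := by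
  apply chain_tl E M S hadj1 hadj2 hadj3
  have hc : ((m - 1 : ℕ) : ZMod m) = 0 - 1 := by
    have : ((m : ℕ) : ZMod m) = 0 := ZMod.natCast_self m
    rw [Nat.cast_sub hm, this, Nat.cast_one]
  rw [hc]
  by_cases hS : (0 : ZMod m) ∈ S
  · simp only [B, if_pos hS]
    exact List.Chain.cons (hadj1 0) (List.Chain.cons (hadj2 0) List.Chain.nil)
  · simp only [B, if_neg hS]
    exact List.Chain.cons (hadj3 0) List.Chain.nil

lemma getLastD_fullList (d : W) : (fullList E M S).getLastD d = E 0 := by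
  unfold fullList B
  by_cases hS : (0 : ZMod m) ∈ S
  · rw [if_pos hS, show [M 0, E 0] = [M 0] ++ [E 0] from rfl, ← List.append_assoc,
      List.getLastD_concat]
  · rw [if_neg hS, List.getLastD_concat]

def cycleWalk (hm : 1 ≤ m) (hadj1 : ∀ i, H.Adj (E (i-1)) (M i))
    (hadj2 : ∀ i, H.Adj (M i) (E i)) (hadj3 : ∀ i, H.Adj (E (i-1)) (E i)) :
    H.Walk (E 0) (E 0) :=
  (walkFrom H (E 0) (fullList E M S)
    (chain_full E M S hm hadj1 hadj2 hadj3)).copy rfl (getLastD_fullList E M S _)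

lemma support_cycleWalk (hm : 1 ≤ m) (hadj1 : ∀ i, H.Adj (E (i-1)) (M i))
    (hadj2 : ∀ i, H.Adj (M i) (E i)) (hadj3 : ∀ i, H.Adj (E (i-1)) (E i)) :
    (cycleWalk E M S hm hadj1 hadj2 hadj3).support = E 0 :: fullList E M S := by
  rw [cycleWalk, Walk.support_copy, support_walkFrom]

lemma edges_cycleWalk_aux (hm : 1 ≤ m) (hadj1 : ∀ i, H.Adj (E (i-1)) (M i))
    (hadj2 : ∀ i, H.Adj (M i) (E i)) (hadj3 : ∀ i, H.Adj (E (i-1)) (E i)) :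
    (cycleWalk E M S hm hadj1 hadj2 hadj3).edges = edgeList (E 0) (fullList E M S) := by
  rw [cycleWalk, Walk.edges_copy, edges_walkFrom]

lemma edgeList_tl :
    ∀ (k : ℕ) (a : W) (l : List W),
      edgeList (E 0) (tl E M S k ++ a :: l) =
        el E M S k ++ s(E ((k : ℕ) : ZMod m), a) :: edgeList a l
  | 0, a, l => by simp [tl, el, edgeList]
  | k + 1, a, l => by
      have hc : ((k : ℕ) : ZMod m) = ((k+1 : ℕ) : ZMod m) - 1 := by push_cast; ring
      rw [tl, el, List.append_assoc]
      by_cases hS : ((k+1 : ℕ) : ZMod m) ∈ S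
      · simp only [B, if_pos hS, eb, List.cons_append, List.nil_append]
        rw [edgeList_tl k, show edgeList (M ((k+1:ℕ) : ZMod m)) (E ((k+1:ℕ):ZMod m) :: a :: l) =
          s(M _, E _) :: s(E _, a) :: edgeList a l from rfl, ← hc]
        simp
      · simp only [B, if_neg hS, eb, List.cons_append, List.nil_append]
        rw [edgeList_tl k, show edgeList (E ((k+1:ℕ) : ZMod m)) (a :: l) =
          s(E _, a) :: edgeList a l from rfl, ← hc]
        simp

lemma edges_cycleWalk (hm : 1 ≤ m) (hadj1 : ∀ i, H.Adj (E (i-1)) (M i))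
    (hadj2 : ∀ i, H.Adj (M i) (E i)) (hadj3 : ∀ i, H.Adj (E (i-1)) (E i)) :
    (cycleWalk E M S hm hadj1 hadj2 hadj3).edges = el E M S (m-1) ++ eb E M S 0 := by
  rw [edges_cycleWalk_aux]
  have hc : ((m - 1 : ℕ) : ZMod m) = 0 - 1 := by
    have h0 : ((m : ℕ) : ZMod m) = 0 := ZMod.natCast_self m
    rw [Nat.cast_sub hm, h0, Nat.cast_one]
  unfold fullList B
  by_cases hS : (0 : ZMod m) ∈ S
  · rw [if_pos hS, edgeList_tl, hc, eb, if_pos hS]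
    rfl
  · rw [if_neg hS, edgeList_tl, hc, eb, if_neg hS]
    rfl

variable {σ : ZMod m → ZMod m}

lemma eb_eb {S S' : Finset (ZMod m)} (hE : Function.Injective E)
    (hME : ∀ i j, M i ≠ E j) (hMM : ∀ i j, M i = M j → j = i ∨ j = σ i)
    (hσ1 : ∀ i, σ i ≠ i + 1) (hσ2 : ∀ i, σ i ≠ i - 1)
    (h1 : (1 : ZMod m) ≠ 0) (h2 : (2 : ZMod m) ≠ 0)
    {x : Sym2 W} {i j : ZMod m} (hi : x ∈ eb E M S i) (hj : x ∈ eb E M S' j) :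
    i = j ∧ (i ∈ S ↔ i ∈ S') := by
  rw [mem_eb] at hi hj
  rcases hi with ⟨hiS, hi | hi⟩ | ⟨hiS, hi⟩ <;>
    rcases hj with ⟨hjS, hj | hj⟩ | ⟨hjS, hj⟩ <;>
      subst hi <;> rw [Sym2.eq_iff] at hj
  · rcases hj with ⟨h3, h4⟩ | ⟨h3, h4⟩
    · have hij : i = j := by have := hE h3; linear_combination this
      exact ⟨hij, by simp [hiS, hij ▸ hjS]⟩
    · exact absurd h3.symm (hME j (i-1))
  · rcases hj with ⟨h3, h4⟩ | ⟨h3, h4⟩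
    · exact absurd h3.symm (hME j (i-1))
    · exfalso
      have h5 : j = i - 1 := (hE h3).symm
      rcases hMM i j h4 with rfl | rfl
      · exact h1 (by linear_combination h5)
      · exact hσ2 i h5
  · exfalso; rcases hj with ⟨h3, h4⟩ | ⟨h3, h4⟩
    · exact hME i j h4
    · exact hME i (j-1) h4
  · rcases hj with ⟨h3, h4⟩ | ⟨h3, h4⟩
    · exact absurd h3 (hME i (j-1))
    · exfalso
      have h5 : i = j - 1 := hE h4
      rcases hMM i j h3 with rfl | rfl
      · exact h1 (by linear_combination h5)
      · exact hσ1 i (by linear_combination -h5)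
  · rcases hj with ⟨h3, h4⟩ | ⟨h3, h4⟩
    · have hij : i = j := hE h4
      exact ⟨hij, by simp [hiS, hij ▸ hjS]⟩
    · exact absurd h3 (hME i j)
  · exfalso; rcases hj with ⟨h3, h4⟩ | ⟨h3, h4⟩
    · exact hME i (j-1) h3
    · exact hME i j h3
  · exfalso; rcases hj with ⟨h3, h4⟩ | ⟨h3, h4⟩
    · exact hME j i h4.symm
    · exact hME j (i-1) h3.symm
  · exfalso; rcases hj with ⟨h3, h4⟩ | ⟨h3, h4⟩
    · exact hME j (i-1) h3.symm
    · exact hME j i h4.symm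
  · rcases hj with ⟨h3, h4⟩ | ⟨h3, h4⟩
    · have hij : i = j := hE h4
      exact ⟨hij, by simp [hiS, hij ▸ hjS]⟩
    · exfalso
      have h5 : i - 1 = j := hE h3
      have h6 : i = j - 1 := hE h4
      exact h2 (by linear_combination h6 - h5)

lemma B_B {S : Finset (ZMod m)} (hE : Function.Injective E)
    (hME : ∀ i j, M i ≠ E j) (hMM : ∀ i j, M i = M j → j = i ∨ j = σ i)
    (hσS : ∀ i, i ∈ S → σ i ∉ S)
    {x : W} {i j : ZMod m} (hi : x ∈ B E M S i) (hj : x ∈ B E M S j) : i = j := by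
  rw [mem_B] at hi hj
  rcases hi with hi | ⟨hiS, hi⟩ <;> rcases hj with hj | ⟨hjS, hj⟩ <;> subst hi
  · exact hE hj
  · exact absurd hj.symm (hME j i)
  · exact absurd hj (hME i j)
  · rcases hMM i j hj with rfl | rfl
    · rfl
    · exact absurd hjS (hσS i hiS)

lemma nodup_eb {S : Finset (ZMod m)} (hE : Function.Injective E)
    (hME : ∀ i j, M i ≠ E j) (h1 : (1 : ZMod m) ≠ 0) (i : ZMod m) :
    (eb E M S i).Nodup := by
  by_cases hS : i ∈ S <;> simp [eb, hS, Sym2.eq_iff]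
  exact ⟨fun h3 _ => hME i (i-1) h3.symm, fun h3 => h1 (by linear_combination -hE h3)⟩

lemma nodup_B {S : Finset (ZMod m)} (hME : ∀ i j, M i ≠ E j) (i : ZMod m) :
    (B E M S i).Nodup := by
  by_cases hS : i ∈ S <;> simp [B, hS]
  exact fun h => hME i i h

lemma nodup_el {S : Finset (ZMod m)} (hE : Function.Injective E)
    (hME : ∀ i j, M i ≠ E j) (hMM : ∀ i j, M i = M j → j = i ∨ j = σ i)
    (hσ1 : ∀ i, σ i ≠ i + 1) (hσ2 : ∀ i, σ i ≠ i - 1)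
    (h1 : (1 : ZMod m) ≠ 0) (h2 : (2 : ZMod m) ≠ 0) :
    ∀ k, k + 1 ≤ m → (el E M S k).Nodup
  | 0, _ => by simp [el]
  | k+1, hk => by
      rw [el]
      refine List.Nodup.append (nodup_el hE hME hMM hσ1 hσ2 h1 h2 k (by omega))
        (nodup_eb E M hE hME h1 _) ?_
      intro x hx1 hx2
      rw [mem_el] at hx1
      obtain ⟨j, hj1, hj2, hj3⟩ := hx1
      have heq := (eb_eb E M hE hME hMM hσ1 hσ2 h1 h2 hj3 hx2).1
      have h' := congrArg ZMod.val heq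
      rw [ZMod.val_cast_of_lt (by omega : j < m),
        ZMod.val_cast_of_lt (by omega : k + 1 < m)] at h'
      omega

lemma nodup_edges {S : Finset (ZMod m)} (hm : 1 ≤ m) (hE : Function.Injective E)
    (hME : ∀ i j, M i ≠ E j) (hMM : ∀ i j, M i = M j → j = i ∨ j = σ i)
    (hσ1 : ∀ i, σ i ≠ i + 1) (hσ2 : ∀ i, σ i ≠ i - 1)
    (h1 : (1 : ZMod m) ≠ 0) (h2 : (2 : ZMod m) ≠ 0) :
    (el E M S (m-1) ++ eb E M S 0).Nodup := by
  refine List.Nodup.append (nodup_el E M hE hME hMM hσ1 hσ2 h1 h2 (m-1) (by omega))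
    (nodup_eb E M hE hME h1 _) ?_
  intro x hx1 hx2
  rw [mem_el] at hx1
  obtain ⟨j, hj1, hj2, hj3⟩ := hx1
  have heq := (eb_eb E M hE hME hMM hσ1 hσ2 h1 h2 hj3 hx2).1
  rw [ZMod.natCast_eq_zero_iff] at heq
  have := Nat.le_of_dvd (by omega) heq
  omega

lemma nodup_tl {S : Finset (ZMod m)} (hE : Function.Injective E)
    (hME : ∀ i j, M i ≠ E j) (hMM : ∀ i j, M i = M j → j = i ∨ j = σ i)
    (hσS : ∀ i, i ∈ S → σ i ∉ S) :
    ∀ k, k + 1 ≤ m → (tl E M S k).Nodup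
  | 0, _ => by simp [tl]
  | k+1, hk => by
      rw [tl]
      refine List.Nodup.append (nodup_tl hE hME hMM hσS k (by omega))
        (nodup_B E M hME _) ?_
      intro x hx1 hx2
      rw [mem_tl] at hx1
      obtain ⟨j, hj1, hj2, hj3⟩ := hx1
      have heq := B_B E M hE hME hMM hσS hj3 hx2
      have h' := congrArg ZMod.val heq
      rw [ZMod.val_cast_of_lt (by omega : j < m),
        ZMod.val_cast_of_lt (by omega : k + 1 < m)] at h'
      omega

lemma nodup_fullList {S : Finset (ZMod m)} (hm : 1 ≤ m) (hE : Function.Injective E)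
    (hME : ∀ i j, M i ≠ E j) (hMM : ∀ i j, M i = M j → j = i ∨ j = σ i)
    (hσS : ∀ i, i ∈ S → σ i ∉ S) :
    (fullList E M S).Nodup := by
  refine List.Nodup.append (nodup_tl E M hE hME hMM hσS (m-1) (by omega))
    (nodup_B E M hME _) ?_
  intro x hx1 hx2
  rw [mem_tl] at hx1
  obtain ⟨j, hj1, hj2, hj3⟩ := hx1
  have heq := B_B E M hE hME hMM hσS hj3 hx2
  rw [ZMod.natCast_eq_zero_iff] at heq
  have := Nat.le_of_dvd (by omega) heq
  omega

lemma mem_fullList [NeZero m] {S : Finset (ZMod m)}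
    (hcov : ∀ w : W, (∃ i, w = E i) ∨ ∃ i, i ∈ S ∧ w = M i) (w : W) :
    w ∈ fullList E M S := by
  have hmem : ∃ i : ZMod m, w ∈ B E M S i := by
    rcases hcov w with ⟨i, rfl⟩ | ⟨i, hiS, rfl⟩
    · exact ⟨i, (mem_B E M S).2 (Or.inl rfl)⟩
    · exact ⟨i, (mem_B E M S).2 (Or.inr ⟨hiS, rfl⟩)⟩
  obtain ⟨i, hi⟩ := hmem
  rw [fullList, List.mem_append]
  by_cases h0 : i = 0
  · right; rwa [h0] at hi
  · left
    rw [mem_tl]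
    have hvlt : i.val < m := ZMod.val_lt i
    have hv0 : i.val ≠ 0 := fun h => h0 ((ZMod.val_eq_zero i).1 h)
    refine ⟨i.val, by omega, by omega, ?_⟩
    rwa [ZMod.natCast_zmod_val]

lemma mem_edges_cycleWalk [NeZero m] {S : Finset (ZMod m)} (hm : 1 ≤ m)
    (hadj1 : ∀ i, H.Adj (E (i-1)) (M i))
    (hadj2 : ∀ i, H.Adj (M i) (E i)) (hadj3 : ∀ i, H.Adj (E (i-1)) (E i)) {x : Sym2 W} :
    x ∈ (cycleWalk E M S hm hadj1 hadj2 hadj3).edges ↔ ∃ i, x ∈ eb E M S i := by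
  rw [edges_cycleWalk, List.mem_append, mem_el]
  constructor
  · rintro (⟨j, _, _, hj⟩ | h)
    · exact ⟨_, hj⟩
    · exact ⟨0, h⟩
  · rintro ⟨i, hi⟩
    by_cases h0 : i = 0
    · right; rwa [h0] at hi
    · left
      have hvlt : i.val < m := ZMod.val_lt i
      have hv0 : i.val ≠ 0 := fun h => h0 ((ZMod.val_eq_zero i).1 h)
      refine ⟨i.val, by omega, by omega, ?_⟩
      rwa [ZMod.natCast_zmod_val]

lemma cycleWalk_isHamiltonianCycle [DecidableEq W] [NeZero m] {S : Finset (ZMod m)} (hm : 1 ≤ m)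
    (hm4 : 4 ≤ m)
    (hadj1 : ∀ i, H.Adj (E (i-1)) (M i))
    (hadj2 : ∀ i, H.Adj (M i) (E i)) (hadj3 : ∀ i, H.Adj (E (i-1)) (E i))
    (hE : Function.Injective E)
    (hME : ∀ i j, M i ≠ E j) (hMM : ∀ i j, M i = M j → j = i ∨ j = σ i)
    (hσ1 : ∀ i, σ i ≠ i + 1) (hσ2 : ∀ i, σ i ≠ i - 1)
    (hσS : ∀ i, i ∈ S → σ i ∉ S)
    (hcov : ∀ w : W, (∃ i, w = E i) ∨ ∃ i, i ∈ S ∧ w = M i) :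
    (cycleWalk E M S hm hadj1 hadj2 hadj3).IsHamiltonianCycle := by
  have h1 : (1 : ZMod m) ≠ 0 := by
    rw [← Nat.cast_one, Ne, ZMod.natCast_eq_zero_iff]
    intro h; have := Nat.le_of_dvd (by omega) h; omega
  have h2 : (2 : ZMod m) ≠ 0 := by
    rw [← Nat.cast_two, Ne, ZMod.natCast_eq_zero_iff]
    intro h; have := Nat.le_of_dvd (by omega) h; omega
  rw [Walk.isHamiltonianCycle_iff_isCycle_and_support_count_tail_eq_one]
  constructor
  · refine ⟨⟨⟨?_⟩, ?_⟩, ?_⟩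
    · rw [edges_cycleWalk]
      exact nodup_edges E M hm hE hME hMM hσ1 hσ2 h1 h2
    · intro hn
      have he := edges_cycleWalk E M S hm hadj1 hadj2 hadj3
      rw [hn, Walk.edges_nil] at he
      have : eb E M S 0 ≠ [] := by by_cases h : (0 : ZMod m) ∈ S <;> simp [eb, h]
      exact this (List.append_eq_nil_iff.mp he.symm).2
    · rw [support_cycleWalk]
      simp only [List.tail_cons]
      exact nodup_fullList E M hm hE hME hMM hσS
  · intro x
    rw [support_cycleWalk]
    simp only [List.tail_cons]
    exact List.count_eq_one_of_mem (nodup_fullList E M hm hE hME hMM hσS)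
      (mem_fullList E M hcov x)

lemma mem_S_iff {S : Finset (ZMod m)} (hE : Function.Injective E)
    (hME : ∀ i j, M i ≠ E j) (hMM : ∀ i j, M i = M j → j = i ∨ j = σ i)
    (hσ1 : ∀ i, σ i ≠ i + 1) (hσ2 : ∀ i, σ i ≠ i - 1)
    (h1 : (1 : ZMod m) ≠ 0) (h2 : (2 : ZMod m) ≠ 0) (i : ZMod m) :
    i ∈ S ↔ ∃ j, s(M i, E i) ∈ eb E M S j := by
  constructor
  · intro h
    exact ⟨i, (mem_eb E M S).2 (Or.inl ⟨h, Or.inr rfl⟩)⟩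
  · rintro ⟨j, hj⟩
    have hx : s(M i, E i) ∈ eb E M ({i} : Finset (ZMod m)) i :=
      (mem_eb E M _).2 (Or.inl ⟨Finset.mem_singleton_self i, Or.inr rfl⟩)
    obtain ⟨rfl, hiff⟩ := eb_eb E M hE hME hMM hσ1 hσ2 h1 h2 hj hx
    exact hiff.2 (Finset.mem_singleton_self _)

end Core

lemma exists_half {β : Type*} [DecidableEq β] (σ : β → β)
    (hinv : ∀ i, σ (σ i) = i) (hnf : ∀ i, σ i ≠ i) (A : Finset β)
    (hA : ∀ i ∈ A, σ i ∈ A) :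
    ∃ R : Finset β, R ⊆ A ∧ ∀ i ∈ A, (i ∈ R ↔ σ i ∉ R) := by
  induction A using Finset.strongInduction with
  | _ A ih =>
    rcases A.eq_empty_or_nonempty with rfl | ⟨a, ha⟩
    · exact ⟨∅, by simp⟩
    · have hssub : (A.erase a).erase (σ a) ⊂ A :=
        lt_of_le_of_lt (Finset.erase_subset _ _) (Finset.erase_ssubset ha)
      have hA' : ∀ i ∈ (A.erase a).erase (σ a), σ i ∈ (A.erase a).erase (σ a) := by
        intro i hi
        simp only [Finset.mem_erase] at hi ⊢
        obtain ⟨hi1, hi2, hi3⟩ := hi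
        exact ⟨fun h => hi2 (by rw [← hinv i, h, hinv]), fun h => hi1 (by rw [← h, hinv]),
          hA i hi3⟩
      obtain ⟨R', hR'sub, hR'⟩ := ih _ hssub (hA' ·)
      have hanR' : a ∉ R' := fun h => by
        have := hR'sub h; simp only [Finset.mem_erase] at this; exact this.2.1 rfl
      have hsanR' : σ a ∉ R' := fun h => by
        have := hR'sub h; simp only [Finset.mem_erase] at this; exact this.1 rfl
      refine ⟨insert a R', ?_, ?_⟩
      · intro x hx
        rcases Finset.mem_insert.1 hx with rfl | hx
        · exact ha
        · exact (Finset.erase_subset _ _) ((Finset.erase_subset _ _) (hR'sub hx))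
      · intro i hi
        by_cases h1 : i = a
        · subst h1
          simp only [Finset.mem_insert, true_or, true_iff]
          push_neg
          exact ⟨hnf i, hsanR'⟩
        · by_cases h2 : i = σ a
          · subst h2
            rw [hinv]
            constructor
            · intro h
              rcases Finset.mem_insert.1 h with h | h
              · exact absurd h (hnf a)
              · exact absurd h hsanR'
            · intro h
              exact absurd (Finset.mem_insert_self a R') h
          · have hiA' : i ∈ (A.erase a).erase (σ a) := by
              simp only [Finset.mem_erase]; exact ⟨h2, h1, hi⟩
            have hσa : σ i ≠ a := by
              have := hA' i hiA'
              simp only [Finset.mem_erase] at this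
              exact this.2.1
            have hgoal := hR' i hiA'
            simp only [Finset.mem_insert, h1, false_or]
            constructor
            · intro h hc
              rcases hc with hc | hc
              · exact hσa hc
              · exact (hgoal.mp h) hc
            · intro h
              exact hgoal.mpr fun hh => h (Or.inr hh)

end CubicAux
open CubicAux in
theorem cubic_many_decompositions {V : Type*} [Fintype V] [DecidableEq V]
    (G : SimpleGraph V) [DecidableRel G.Adj] (n : ℕ)
    (hcard : Fintype.card V = 2 * n)
    (hreg : G.IsRegularOfDegree 3)
    (hham : ∃ (a : V) (c : G.Walk a a), c.IsHamiltonianCycle) :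
    2 ^ n ≤ {EE : Set (Sym2 G.edgeSet) × Set (Sym2 G.edgeSet) |
      (∃ (a : G.edgeSet) (p : (G.lineGraph).Walk a a),
        p.IsHamiltonianCycle ∧ {x | x ∈ p.edges} = EE.1) ∧
      (∃ (b : G.edgeSet) (q : (G.lineGraph).Walk b b),
        q.IsHamiltonianCycle ∧ {x | x ∈ q.edges} = EE.2) ∧
      Disjoint EE.1 EE.2 ∧ EE.1 ∪ EE.2 = (G.lineGraph).edgeSet}.ncard := by
  classical
  obtain ⟨a, c, hc⟩ := hham
  set m := 2 * n with hmn
  have hm4 : 4 ≤ m := by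
    have h1 := hreg a
    have h2 : G.degree a < Fintype.card V := G.degree_lt_card_verts a
    rw [h1, hcard] at h2
    omega
  haveI : NeZero m := ⟨by omega⟩
  have hm1 : 1 ≤ m := by omega
  have h1ne : (1 : ZMod m) ≠ 0 := by
    rw [← Nat.cast_one, Ne, ZMod.natCast_eq_zero_iff]
    intro h; have := Nat.le_of_dvd (by omega) h; omega
  have h2ne : (2 : ZMod m) ≠ 0 := by
    rw [← Nat.cast_two, Ne, ZMod.natCast_eq_zero_iff]
    intro h; have := Nat.le_of_dvd (by omega) h; omega
  have hnonil : ¬ c.Nil := hc.isCycle.not_nil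
  set L := c.support.tail with hLdef
  have hLlen : L.length = m := by
    have h1 : c.support.length = c.length + 1 := Walk.length_support c
    have h2 : c.length = Fintype.card V := hc.length_eq
    rw [hLdef, List.length_tail, h1, h2, hcard]
    omega
  have hLne : L ≠ [] := by
    intro h; rw [h] at hLlen; simp at hLlen; omega
  have hLnd : L.Nodup := hc.isCycle.support_nodup
  have hLmem : ∀ v : V, v ∈ L := by
    intro v
    have h1 := hc.isHamiltonian_tail.mem_support v
    rwa [Walk.support_tail_of_not_nil c hnonil] at h1
  have hsupp : c.support = a :: L := c.support_eq_cons
  -- consecutive adjacency in L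
  have hch0 : List.Chain' G.Adj (a :: L) := by
    rw [← hsupp]; exact c.isChain_adj_support
  have hadjL : ∀ (j : ℕ) (hj : j + 1 < m),
      G.Adj (L.get ⟨j, by omega⟩) (L.get ⟨j + 1, by omega⟩) := by
    intro j hj
    have h2 := List.isChain_iff_getElem.mp hch0 (j+1) (by simp; omega)
    simpa using h2
  have hheadadj : G.Adj a (L.get ⟨0, by omega⟩) := by
    have h2 := List.isChain_iff_getElem.mp hch0 0 (by simp; omega)
    simpa using h2
  have hgetc : ∀ (j k : ℕ) (hj : j < L.length) (hk : k < L.length), j = k →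
      L.get ⟨j, hj⟩ = L.get ⟨k, hk⟩ := by
    intro j k hj hk h
    subst h
    rfl
  have hlast : L.get ⟨m - 1, by omega⟩ = a := by
    have h2 : ∀ (l : List V) (h : l ≠ []) (heq : c.support = l), l.getLast h = a := by
      intro l h heq
      subst heq
      exact c.getLast_support
    have h3 := h2 (a :: L) (by simp) hsupp
    rw [List.getLast_cons hLne, List.getLast_eq_getElem] at h3
    exact (hgetc _ _ _ _ (by omega)).trans h3
  -- the vertex enumeration
  set f : ZMod m → V := fun i => L.get ⟨i.val, by rw [hLlen]; exact ZMod.val_lt i⟩ with hfdef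
  have hfval : ∀ (i : ZMod m) (h : i.val < L.length), f i = L.get ⟨i.val, h⟩ := fun i h => rfl
  have hfinj : Function.Injective f := by
    intro i j h
    have h2 := List.nodup_iff_injective_get.mp hLnd h
    have h3 : i.val = j.val := congrArg Fin.val h2
    exact ZMod.val_injective m h3
  have hfsurj : Function.Surjective f := by
    intro v
    obtain ⟨k, hk⟩ := List.mem_iff_get.mp (hLmem v)
    refine ⟨((k : ℕ) : ZMod m), ?_⟩
    have hlt : (k : ℕ) < m := by rw [← hLlen]; exact k.isLt
    have hval : (((k : ℕ) : ZMod m)).val = (k : ℕ) := ZMod.val_cast_of_lt hlt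
    rw [hfval _ (by rw [hval]; exact k.isLt)]
    rw [← hk]
    exact hgetc _ _ _ _ hval
  have hfadj : ∀ i : ZMod m, G.Adj (f i) (f (i + 1)) := by
    intro i
    have hk : i.val < m := ZMod.val_lt i
    by_cases hkm : i.val + 1 < m
    · have hv : (i + 1).val = i.val + 1 := by
        have h3 : i + 1 = ((i.val + 1 : ℕ) : ZMod m) := by
          rw [Nat.cast_add, Nat.cast_one, ZMod.natCast_zmod_val]
        rw [h3, ZMod.val_cast_of_lt hkm]
      have h4 : f (i + 1) = L.get ⟨i.val + 1, by omega⟩ := by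
        rw [hfval _ (by omega)]
        exact hgetc _ _ _ _ hv
      rw [h4, hfval _ (by omega)]
      exact hadjL i.val hkm
    · have hkm' : i.val = m - 1 := by omega
      have hv : i + 1 = 0 := by
        have h3 : i + 1 = ((i.val + 1 : ℕ) : ZMod m) := by
          rw [Nat.cast_add, Nat.cast_one, ZMod.natCast_zmod_val]
        rw [h3, show i.val + 1 = m by omega, ZMod.natCast_self]
      have h4 : f i = a := by
        rw [hfval _ (by omega)]
        exact (hgetc _ _ _ (by omega) hkm').trans hlast
      have h5 : f (i + 1) = L.get ⟨0, by omega⟩ := by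
        rw [hv, hfval _ (by rw [ZMod.val_zero]; omega)]
        exact hgetc _ _ _ _ (ZMod.val_zero)
      rw [h4, h5]
      exact hheadadj
  have hadjf : ∀ i : ZMod m, G.Adj (f (i - 1)) (f i) := by
    intro i
    have := hfadj (i - 1)
    rwa [sub_add_cancel] at this
  have hne2 : ∀ i : ZMod m, i - 1 ≠ i + 1 := by
    intro i h
    exact h2ne (by linear_combination -h)
  -- third neighbor
  have hthird : ∀ i : ZMod m, ∃ j, G.Adj (f i) (f j) ∧ j ≠ i - 1 ∧ j ≠ i + 1 := by
    intro i
    have hN : (G.neighborFinset (f i)).card = 3 := hreg (f i)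
    have hpair : ({f (i-1), f (i+1)} : Finset V) ⊆ G.neighborFinset (f i) := by
      intro x hx
      rcases Finset.mem_insert.1 hx with rfl | hx
      · exact (G.mem_neighborFinset _ _).2 (hadjf i).symm
      · rw [Finset.mem_singleton] at hx
        subst hx
        exact (G.mem_neighborFinset _ _).2 (hfadj i)
    have hpc : ({f (i-1), f (i+1)} : Finset V).card = 2 :=
      Finset.card_pair (fun h => hne2 i (hfinj h))
    have hpos : 0 < (G.neighborFinset (f i) \ {f (i-1), f (i+1)}).card := by
      rw [Finset.card_sdiff_of_subset hpair, hN, hpc]; omega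
    obtain ⟨w, hw⟩ := Finset.card_pos.mp hpos
    rw [Finset.mem_sdiff] at hw
    obtain ⟨j, rfl⟩ := hfsurj w
    refine ⟨j, (G.mem_neighborFinset _ _).1 hw.1, fun h => hw.2 ?_, fun h => hw.2 ?_⟩
    · rw [h]; exact Finset.mem_insert_self _ _
    · rw [h]; exact Finset.mem_insert_of_mem (Finset.mem_singleton_self _)
  choose σ hσadj hσm1 hσp1 using hthird
  have hσnbr : ∀ i, G.neighborFinset (f i) = {f (i-1), f (i+1), f (σ i)} := by
    intro i
    symm
    apply Finset.eq_of_subset_of_card_le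
    · intro x hx
      simp only [Finset.mem_insert, Finset.mem_singleton] at hx
      rcases hx with rfl | rfl | rfl
      · exact (G.mem_neighborFinset _ _).2 (hadjf i).symm
      · exact (G.mem_neighborFinset _ _).2 (hfadj i)
      · exact (G.mem_neighborFinset _ _).2 (hσadj i)
    · have hdeg : (G.neighborFinset (f i)).card = 3 := hreg (f i)
      rw [hdeg, Finset.card_insert_of_notMem, Finset.card_insert_of_notMem,
        Finset.card_singleton]
      · rw [Finset.mem_singleton]
        exact fun h => hσp1 i (hfinj h).symm
      · simp only [Finset.mem_insert, Finset.mem_singleton]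
        push_neg
        exact ⟨fun h => hne2 i (hfinj h), fun h => hσm1 i (hfinj h).symm⟩
  have hnbr_iff : ∀ i j, G.Adj (f i) (f j) → (j = i - 1 ∨ j = i + 1 ∨ j = σ i) := by
    intro i j h
    have h2 : f j ∈ G.neighborFinset (f i) := (G.mem_neighborFinset _ _).2 h
    rw [hσnbr i] at h2
    simp only [Finset.mem_insert, Finset.mem_singleton] at h2
    rcases h2 with h2 | h2 | h2
    · exact Or.inl (hfinj h2)
    · exact Or.inr (Or.inl (hfinj h2))
    · exact Or.inr (Or.inr (hfinj h2))
  have hσne : ∀ i, σ i ≠ i := fun i h => G.loopless.irrefl (f i) (by have := hσadj i; rwa [h] at this)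
  have hσσ : ∀ i, σ (σ i) = i := by
    intro i
    rcases hnbr_iff (σ i) i (hσadj i).symm with h | h | h
    · exact absurd (by linear_combination -h : σ i = i + 1) (hσp1 i)
    · exact absurd (by linear_combination -h : σ i = i - 1) (hσm1 i)
    · exact h.symm
  have hσinj : Function.Injective σ := fun i j h => by rw [← hσσ i, h, hσσ]
  -- edges of G
  set E : ZMod m → G.edgeSet := fun i => ⟨s(f i, f (i+1)), (G.mem_edgeSet).2 (hfadj i)⟩
    with hEdef
  set M : ZMod m → G.edgeSet := fun i => ⟨s(f i, f (σ i)), (G.mem_edgeSet).2 (hσadj i)⟩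
    with hMdef
  have hEval : ∀ i, (E i : Sym2 V) = s(f i, f (i+1)) := fun i => rfl
  have hMval : ∀ i, (M i : Sym2 V) = s(f i, f (σ i)) := fun i => rfl
  have hEinj : Function.Injective E := by
    intro i j h
    have h2 : s(f i, f (i+1)) = s(f j, f (j+1)) := congrArg Subtype.val h
    rw [Sym2.eq_iff] at h2
    rcases h2 with ⟨h3, -⟩ | ⟨h3, h4⟩
    · exact hfinj h3
    · have h5 : i = j + 1 := hfinj h3
      have h6 : i + 1 = j := hfinj h4
      exact absurd (by linear_combination h6 - h5 : (2:ZMod m) = 0) h2ne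
  have hMEne : ∀ i j, M i ≠ E j := by
    intro i j h
    have h2 : s(f i, f (σ i)) = s(f j, f (j+1)) := congrArg Subtype.val h
    rw [Sym2.eq_iff] at h2
    rcases h2 with ⟨h3, h4⟩ | ⟨h3, h4⟩
    · have h5 : i = j := hfinj h3
      have h6 : σ i = j + 1 := hfinj h4
      exact hσp1 i (by rw [h6, h5])
    · have h5 : i = j + 1 := hfinj h3
      have h6 : σ i = j := hfinj h4
      exact hσm1 i (by rw [h6]; linear_combination -h5)
  have hMM : ∀ i j, M i = M j → j = i ∨ j = σ i := by
    intro i j h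
    have h2 : s(f i, f (σ i)) = s(f j, f (σ j)) := congrArg Subtype.val h
    rw [Sym2.eq_iff] at h2
    rcases h2 with ⟨h3, -⟩ | ⟨-, h4⟩
    · exact Or.inl (hfinj h3).symm
    · exact Or.inr (hfinj h4).symm
  have hMswap : ∀ i, M (σ i) = M i := by
    intro i
    apply Subtype.ext
    rw [hMval, hMval, hσσ]
    exact Sym2.eq_swap
  -- line graph adjacencies
  have hadj1 : ∀ i, (G.lineGraph).Adj (E (i-1)) (M i) := by
    intro i
    rw [lineGraph_adj_iff_exists]
    refine ⟨Ne.symm (hMEne i (i-1)), f i, ?_, ?_⟩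
    · rw [hEval, sub_add_cancel]
      exact Sym2.mem_mk_right _ _
    · rw [hMval]
      exact Sym2.mem_mk_left _ _
  have hadj2 : ∀ i, (G.lineGraph).Adj (M i) (E i) := by
    intro i
    rw [lineGraph_adj_iff_exists]
    refine ⟨hMEne i i, f i, ?_, ?_⟩
    · rw [hMval]; exact Sym2.mem_mk_left _ _
    · rw [hEval]; exact Sym2.mem_mk_left _ _
  have hadj3 : ∀ i, (G.lineGraph).Adj (E (i-1)) (E i) := by
    intro i
    rw [lineGraph_adj_iff_exists]
    refine ⟨fun h => h1ne (by linear_combination - hEinj h), f i, ?_, ?_⟩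
    · rw [hEval, sub_add_cancel]; exact Sym2.mem_mk_right _ _
    · rw [hEval]; exact Sym2.mem_mk_left _ _
  -- classification of edges through a vertex
  have key : ∀ (i : ZMod m) (u v : V) (huv : G.Adj u v) (hmem : s(u, v) ∈ G.edgeSet),
      u = f i →
      (⟨s(u, v), hmem⟩ : G.edgeSet) = E (i-1) ∨
      (⟨s(u, v), hmem⟩ : G.edgeSet) = E i ∨
      (⟨s(u, v), hmem⟩ : G.edgeSet) = M i := by
    intro i u v huv hmem hu
    subst hu
    obtain ⟨j, rfl⟩ := hfsurj v
    rcases hnbr_iff i j huv with rfl | rfl | rfl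
    · left
      apply Subtype.ext
      show s(f i, f (i - 1)) = (E (i-1) : Sym2 V)
      rw [hEval, sub_add_cancel]
      exact Sym2.eq_swap
    · right; left
      exact Subtype.ext (by rw [hEval])
    · right; right
      exact Subtype.ext (by rw [hMval])
  have htri : ∀ (w : G.edgeSet) (i : ZMod m), f i ∈ (w : Sym2 V) →
      w = E (i-1) ∨ w = E i ∨ w = M i := by
    rintro ⟨e, he⟩ i hi
    revert he hi
    induction e using Sym2.ind with
    | _ x y =>
      intro he hi
      have hadj : G.Adj x y := (G.mem_edgeSet).1 he
      rw [Sym2.mem_iff] at hi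
      rcases hi with hx | hy
      · exact key i x y hadj he hx.symm
      · have h2 := key i y x hadj.symm (by rwa [Sym2.eq_swap]) hy.symm
        have h3 : (⟨s(y, x), by rwa [Sym2.eq_swap]⟩ : G.edgeSet) =
            ⟨s(x, y), he⟩ := Subtype.ext Sym2.eq_swap
        rwa [h3] at h2
  have hcovV : ∀ w : G.edgeSet, (∃ i, w = E i) ∨ (∃ i, w = M i) := by
    intro w
    have hne : (w : Sym2 V).out.1 ∈ (w : Sym2 V) := Sym2.out_fst_mem _
    obtain ⟨i, hi⟩ := hfsurj ((w : Sym2 V).out.1)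
    rcases htri w i (by rw [hi]; exact hne) with h | h | h
    · exact Or.inl ⟨i - 1, h⟩
    · exact Or.inl ⟨i, h⟩
    · exact Or.inr ⟨i, h⟩
    -- half set R
  obtain ⟨R, -, hR0⟩ := exists_half σ hσσ hσne Finset.univ (by simp)
  have hR : ∀ i, i ∈ R ↔ σ i ∉ R := fun i => hR0 i (Finset.mem_univ i)
  have hRc : R.image σ = Rᶜ := by
    ext x
    simp only [Finset.mem_image, Finset.mem_compl]
    constructor
    · rintro ⟨y, hy, rfl⟩
      exact (hR y).1 hy
    · intro hx
      refine ⟨σ x, ?_, hσσ x⟩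
      have h2 := hR (σ x)
      rw [hσσ] at h2
      exact h2.mpr hx
  have hRcard : R.card = n := by
    have h1 : (R.image σ).card = R.card := Finset.card_image_of_injective R hσinj
    have h2 := Finset.card_add_card_compl R
    rw [← hRc, h1, ZMod.card] at h2
    omega
  have hmemST : ∀ (T : Finset (ZMod m)), T ⊆ R →
      ∀ i, (i ∈ T ∪ (R \ T).image σ ↔ (i ∈ T ∨ σ i ∈ R \ T)) := by
    intro T hT i
    simp only [Finset.mem_union, Finset.mem_image]
    constructor
    · rintro (h | ⟨y, hy, rfl⟩)
      · exact Or.inl h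
      · right; rwa [hσσ]
    · rintro (h | h)
      · exact Or.inl h
      · exact Or.inr ⟨σ i, h, hσσ i⟩
  have hSTvalid : ∀ (T : Finset (ZMod m)), T ⊆ R →
      ∀ i, (i ∈ T ∪ (R \ T).image σ ↔ σ i ∉ T ∪ (R \ T).image σ) := by
    intro T hT i
    rw [hmemST T hT i, hmemST T hT (σ i), hσσ]
    by_cases hiR : i ∈ R
    · have hσiR : σ i ∉ R := (hR i).1 hiR
      have h1 : σ i ∉ T := fun h => hσiR (hT h)
      have h2 : ¬ (σ i ∈ R \ T) := fun h => hσiR (Finset.mem_sdiff.1 h).1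
      constructor
      · rintro (h | h) hc
        · rcases hc with hc | hc
          · exact h1 hc
          · exact (Finset.mem_sdiff.1 hc).2 h
        · exact h2 h
      · intro h
        left
        by_contra hiT
        exact h (Or.inr (Finset.mem_sdiff.2 ⟨hiR, hiT⟩))
    · have hσiR : σ i ∈ R := by
        have h2 := hR (σ i)
        rw [hσσ] at h2
        exact h2.mpr hiR
      have hiT : i ∉ T := fun h => hiR (hT h)
      have h2 : ¬ (i ∈ R \ T) := fun h => hiR (Finset.mem_sdiff.1 h).1
      constructor
      · rintro (h | h) hc
        · exact hiT h
        · rcases hc with hc | hc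
          · exact (Finset.mem_sdiff.1 h).2 hc
          · exact h2 hc
      · intro h
        right
        rw [Finset.mem_sdiff]
        exact ⟨hσiR, fun hc => h (Or.inl hc)⟩
  have hSTR : ∀ (T : Finset (ZMod m)), T ⊆ R → (T ∪ (R \ T).image σ) ∩ R = T := by
    intro T hT
    ext i
    rw [Finset.mem_inter, hmemST T hT i]
    constructor
    · rintro ⟨h | h, hiR⟩
      · exact h
      · exact absurd ((Finset.mem_sdiff.1 h).1) ((hR i).1 hiR)
    · intro h
      exact ⟨Or.inl h, hT h⟩
  have hcovS : ∀ S : Finset (ZMod m), (∀ i, i ∈ S ↔ σ i ∉ S) →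
      ∀ w : G.edgeSet, (∃ i, w = E i) ∨ ∃ i, i ∈ S ∧ w = M i := by
    intro S hv w
    rcases hcovV w with h | ⟨i, rfl⟩
    · exact Or.inl h
    · by_cases hi : i ∈ S
      · exact Or.inr ⟨i, hi, rfl⟩
      · have hσi : σ i ∈ S := by
          have h2 := hv (σ i)
          rw [hσσ] at h2
          exact h2.mpr hi
        exact Or.inr ⟨σ i, hσi, (hMswap i).symm⟩
  set ESet : Finset (ZMod m) → Set (Sym2 G.edgeSet) :=
    fun S => {x | ∃ i, x ∈ eb E M S i} with hESetdef
  have hmemESet : ∀ (S : Finset (ZMod m)) (x : Sym2 G.edgeSet),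
      x ∈ ESet S ↔ ∃ i, x ∈ eb E M S i := fun S x => Iff.rfl
  have hunion : ∀ S : Finset (ZMod m), ESet S ∪ ESet Sᶜ = (G.lineGraph).edgeSet := by
    intro S
    ext x
    simp only [Set.mem_union, hmemESet]
    constructor
    · rintro (⟨i, hx⟩ | ⟨i, hx⟩)
      · rw [mem_eb] at hx
        rcases hx with ⟨hS, rfl | rfl⟩ | ⟨hS, rfl⟩
        · exact hadj1 i
        · exact hadj2 i
        · exact hadj3 i
      · rw [mem_eb] at hx
        rcases hx with ⟨hS, rfl | rfl⟩ | ⟨hS, rfl⟩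
        · exact hadj1 i
        · exact hadj2 i
        · exact hadj3 i
    · intro hx
      revert hx
      induction x using Sym2.ind with
      | _ e₁ e₂ =>
        intro hx
        rw [SimpleGraph.mem_edgeSet, lineGraph_adj_iff_exists] at hx
        obtain ⟨hne, v, hv1, hv2⟩ := hx
        obtain ⟨i, rfl⟩ := hfsurj v
        have keymem : ∀ y : Sym2 G.edgeSet,
            (y = s(E (i-1), M i) ∨ y = s(M i, E i) ∨ y = s(E (i-1), E i)) →
            ((∃ j, y ∈ eb E M S j) ∨ (∃ j, y ∈ eb E M Sᶜ j)) := by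
          intro y hy
          by_cases hi : i ∈ S
          · have hic : i ∉ Sᶜ := by simp [hi]
            rcases hy with rfl | rfl | rfl
            · exact Or.inl ⟨i, (mem_eb E M S).2 (Or.inl ⟨hi, Or.inl rfl⟩)⟩
            · exact Or.inl ⟨i, (mem_eb E M S).2 (Or.inl ⟨hi, Or.inr rfl⟩)⟩
            · exact Or.inr ⟨i, (mem_eb E M Sᶜ).2 (Or.inr ⟨hic, rfl⟩)⟩
          · have hic : i ∈ Sᶜ := by simp [hi]
            rcases hy with rfl | rfl | rfl
            · exact Or.inr ⟨i, (mem_eb E M Sᶜ).2 (Or.inl ⟨hic, Or.inl rfl⟩)⟩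
            · exact Or.inr ⟨i, (mem_eb E M Sᶜ).2 (Or.inl ⟨hic, Or.inr rfl⟩)⟩
            · exact Or.inl ⟨i, (mem_eb E M S).2 (Or.inr ⟨hi, rfl⟩)⟩
        rcases htri e₁ i hv1 with rfl | rfl | rfl <;> rcases htri e₂ i hv2 with rfl | rfl | rfl
        · exact absurd rfl hne
        · exact keymem _ (Or.inr (Or.inr rfl))
        · exact keymem _ (Or.inl rfl)
        · exact keymem _ (Or.inr (Or.inr Sym2.eq_swap))
        · exact absurd rfl hne
        · exact keymem _ (Or.inr (Or.inl Sym2.eq_swap))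
        · exact keymem _ (Or.inl Sym2.eq_swap)
        · exact keymem _ (Or.inr (Or.inl rfl))
        · exact absurd rfl hne
  have hdisj : ∀ S : Finset (ZMod m), Disjoint (ESet S) (ESet Sᶜ) := by
    intro S
    rw [Set.disjoint_left]
    rintro x ⟨i, hi⟩ ⟨j, hj⟩
    obtain ⟨rfl, hiff⟩ := eb_eb E M hEinj hMEne hMM hσp1 hσm1 h1ne h2ne hi hj
    rw [Finset.mem_compl] at hiff
    tauto
  have hrec : ∀ (S : Finset (ZMod m)) (i : ZMod m), (i ∈ S ↔ s(M i, E i) ∈ ESet S) := by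
    intro S i
    rw [hmemESet]
    exact mem_S_iff E M hEinj hMEne hMM hσp1 hσm1 h1ne h2ne i
  have hwalkfacts : ∀ (S : Finset (ZMod m)), (∀ i, i ∈ S ↔ σ i ∉ S) →
      ∃ (b : G.edgeSet) (p : (G.lineGraph).Walk b b), p.IsHamiltonianCycle ∧
        {x | x ∈ p.edges} = ESet S := by
    intro S hv
    refine ⟨E 0, cycleWalk E M S hm1 hadj1 hadj2 hadj3, ?_, ?_⟩
    · exact cycleWalk_isHamiltonianCycle E M hm1 hm4 hadj1 hadj2 hadj3 hEinj hMEne hMM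
        hσp1 hσm1 (fun i h => (hv i).1 h) (hcovS S hv)
    · ext x
      exact (mem_edges_cycleWalk E M hm1 hadj1 hadj2 hadj3).trans (hmemESet S x).symm
  set F := Finset.image
    (fun T => (ESet (T ∪ (R \ T).image σ), ESet ((T ∪ (R \ T).image σ)ᶜ))) R.powerset
    with hFdef
  have hFcard : F.card = 2 ^ n := by
    rw [hFdef, Finset.card_image_of_injOn, Finset.card_powerset, hRcard]
    intro T1 h1 T2 h2 heq
    rw [Finset.mem_coe, Finset.mem_powerset] at h1 h2
    have heq1 : ESet (T1 ∪ (R \ T1).image σ) = ESet (T2 ∪ (R \ T2).image σ) :=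
      congrArg Prod.fst heq
    have hSeq : T1 ∪ (R \ T1).image σ = T2 ∪ (R \ T2).image σ := by
      ext i
      rw [hrec _ i, heq1, ← hrec _ i]
    have h3 := hSTR T1 h1
    rw [hSeq, hSTR T2 h2] at h3
    exact h3.symm
  have hle : (↑F : Set (Set (Sym2 G.edgeSet) × Set (Sym2 G.edgeSet))) ⊆
      {EE : Set (Sym2 G.edgeSet) × Set (Sym2 G.edgeSet) |
      (∃ (a : G.edgeSet) (p : (G.lineGraph).Walk a a),
        p.IsHamiltonianCycle ∧ {x | x ∈ p.edges} = EE.1) ∧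
      (∃ (b : G.edgeSet) (q : (G.lineGraph).Walk b b),
        q.IsHamiltonianCycle ∧ {x | x ∈ q.edges} = EE.2) ∧
      Disjoint EE.1 EE.2 ∧ EE.1 ∪ EE.2 = (G.lineGraph).edgeSet} := by
    intro x hx
    rw [Finset.mem_coe, hFdef, Finset.mem_image] at hx
    obtain ⟨T, hT, rfl⟩ := hx
    rw [Finset.mem_powerset] at hT
    have hv := hSTvalid T hT
    have hvc : ∀ i, i ∈ (T ∪ (R \ T).image σ)ᶜ ↔ σ i ∉ (T ∪ (R \ T).image σ)ᶜ := by
      intro i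
      rw [Finset.mem_compl, Finset.mem_compl, not_not]
      constructor
      · intro h
        by_contra hc
        exact h ((hv i).2 hc)
      · intro h hc
        exact ((hv i).1 hc) h
    exact ⟨hwalkfacts _ hv, hwalkfacts _ hvc, hdisj _, hunion _⟩
  calc (2:ℕ)^n = F.card := hFcard.symm
    _ = (↑F : Set (Set (Sym2 G.edgeSet) × Set (Sym2 G.edgeSet))).ncard :=
        (Set.ncard_coe_finset F).symm
    _ ≤ _ := Set.ncard_le_ncard hle (Set.toFinite _)
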